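/- Fix δ > 0 and set ω(δ) = sup_{s ∈ [0,δ]} s · max(0, −κ(s)). Then for every r ≥ 0 with r ≠ R₁ and every χ ∈ [0,1] such that χ = 1 whenever r ≥ δ, one has 4 f''(r) χ² − r κ(r) f'(r) ≤ −2c f(r) + ω(δ) + 2c f(δ). -/

import Mathlib

open MeasureTheory Real Set
open scoped RealInnerProductSpace

/-- `φ(r) = exp(−(1/4) ∫₀^r s κ₋(s) ds)` where `κ₋ = max(0, −κ)`. -/
noncomputable def phiF (κ : ℝ → ℝ) (r : ℝ) : ℝ :=
  Real.exp (-(1 / 4) * ∫ s in (0:ℝ)..r, s * max 0 (-κ s))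

/-- `Φ(r) = ∫₀^r φ(s) ds`. -/
noncomputable def PhiF (κ : ℝ → ℝ) (r : ℝ) : ℝ := ∫ s in (0:ℝ)..r, phiF κ s

/-- `R₀ = inf {s ≥ 0 : κ(r) ≥ 0 for all r ≥ s}`. -/
noncomputable def R0 (κ : ℝ → ℝ) : ℝ := sInf {s : ℝ | 0 ≤ s ∧ ∀ r, s ≤ r → 0 ≤ κ r}

/-- `R₁ = inf {s ≥ R₀ : s(s − R₀)κ(r) ≥ 8 for all r ≥ s}`. -/
noncomputable def R1 (κ : ℝ → ℝ) : ℝ :=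
  sInf {s : ℝ | R0 κ ≤ s ∧ ∀ r, s ≤ r → 8 ≤ s * (s - R0 κ) * κ r}

/-- `c = (∫₀^{R₁} Φ(s) φ(s)⁻¹ ds)⁻¹`. -/
noncomputable def cF (κ : ℝ → ℝ) : ℝ := (∫ s in (0:ℝ)..R1 κ, PhiF κ s / phiF κ s)⁻¹

/-- `g(r) = 1 − (c/2) ∫₀^{min(r,R₁)} Φ(s) φ(s)⁻¹ ds`. -/
noncomputable def gF (κ : ℝ → ℝ) (r : ℝ) : ℝ :=
  1 - cF κ / 2 * ∫ s in (0:ℝ)..min r (R1 κ), PhiF κ s / phiF κ s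

/-- `f(r) = ∫₀^r φ(s) g(s) ds`. -/
noncomputable def fF (κ : ℝ → ℝ) (r : ℝ) : ℝ := ∫ s in (0:ℝ)..r, phiF κ s * gF κ s

namespace Stest
variable {κ : ℝ → ℝ}

lemma uIcc_sub {a b : ℝ} (ha : 0 ≤ a) (hb : 0 ≤ b) : uIcc a b ⊆ Ici 0 :=
  fun _ hx => le_trans (le_min ha hb) hx.1

lemma kmCont (hκ : ContinuousOn κ (Ici 0)) :
    ContinuousOn (fun s => s * max 0 (-κ s)) (Ici 0) :=
  continuousOn_id.mul ((continuous_const.max continuous_neg).comp_continuousOn hκ)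

lemma kmInt (hκ : ContinuousOn κ (Ici 0)) {a b : ℝ} (ha : 0 ≤ a) (hb : 0 ≤ b) :
    IntervalIntegrable (fun s => s * max 0 (-κ s)) volume a b :=
  ((kmCont hκ).mono (uIcc_sub ha hb)).intervalIntegrable

lemma primitive_hasDeriv {h : ℝ → ℝ} (hcont : ContinuousOn h (Ici 0))
    (hint : ∀ {a b : ℝ}, 0 ≤ a → 0 ≤ b → IntervalIntegrable h volume a b)
    {r : ℝ} (hr : 0 ≤ r) :
    HasDerivWithinAt (fun u => ∫ s in (0:ℝ)..u, h s) (h r) (Ici 0) r := by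
  rcases eq_or_lt_of_le hr with rfl | hr'
  · exact intervalIntegral.integral_hasDerivWithinAt_right (hint le_rfl le_rfl)
      ((hcont.mono Ioi_subset_Ici_self).stronglyMeasurableAtFilter_nhdsWithin measurableSet_Ioi 0)
      ((hcont 0 self_mem_Ici).mono Ioi_subset_Ici_self)
  · exact (intervalIntegral.integral_hasDerivAt_right (hint le_rfl hr)
      (ContinuousOn.stronglyMeasurableAtFilter isOpen_Ioi (hcont.mono Ioi_subset_Ici_self) r hr')
      (hcont.continuousAt (Ici_mem_nhds hr'))).hasDerivWithinAt

lemma phi_hasDeriv (hκ : ContinuousOn κ (Ici 0)) {r : ℝ} (hr : 0 ≤ r) :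
    HasDerivWithinAt (phiF κ) (-(1/4) * (r * max 0 (-κ r)) * phiF κ r) (Ici 0) r := by
  have h := ((primitive_hasDeriv (kmCont hκ) (fun ha hb => kmInt hκ ha hb) hr).const_mul
    (-(1/4) : ℝ)).exp
  convert h using 1
  · rfl
  · rw [phiF]; ring

lemma phi_pos (r : ℝ) : 0 < phiF κ r := Real.exp_pos _

lemma phi_le_one (hκ : ContinuousOn κ (Ici 0)) {r : ℝ} (hr : 0 ≤ r) : phiF κ r ≤ 1 := by
  have h : 0 ≤ ∫ s in (0:ℝ)..r, s * max 0 (-κ s) :=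
    intervalIntegral.integral_nonneg hr (fun u hu => mul_nonneg hu.1 (le_max_left _ _))
  rw [phiF]
  calc Real.exp (-(1/4) * ∫ s in (0:ℝ)..r, s * max 0 (-κ s)) ≤ Real.exp 0 :=
        Real.exp_le_exp.2 (by nlinarith)
    _ = 1 := Real.exp_zero

lemma phi_anti (hκ : ContinuousOn κ (Ici 0)) {x y : ℝ} (hx : 0 ≤ x) (hxy : x ≤ y) :
    phiF κ y ≤ phiF κ x := by
  rw [phiF, phiF]
  apply Real.exp_le_exp.2
  have hadd := intervalIntegral.integral_add_adjacent_intervals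
    (kmInt hκ le_rfl hx) (kmInt hκ hx (hx.trans hxy))
  have h : 0 ≤ ∫ s in x..y, s * max 0 (-κ s) :=
    intervalIntegral.integral_nonneg hxy (fun u hu => mul_nonneg (hx.trans hu.1) (le_max_left _ _))
  nlinarith

lemma phi_contOn (hκ : ContinuousOn κ (Ici 0)) : ContinuousOn (phiF κ) (Ici 0) :=
  fun r hr => (phi_hasDeriv hκ hr).continuousWithinAt

lemma phiInt (hκ : ContinuousOn κ (Ici 0)) {a b : ℝ} (ha : 0 ≤ a) (hb : 0 ≤ b) :
    IntervalIntegrable (phiF κ) volume a b :=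
  ((phi_contOn hκ).mono (uIcc_sub ha hb)).intervalIntegrable

lemma Phi_hasDeriv (hκ : ContinuousOn κ (Ici 0)) {r : ℝ} (hr : 0 ≤ r) :
    HasDerivWithinAt (PhiF κ) (phiF κ r) (Ici 0) r :=
  primitive_hasDeriv (phi_contOn hκ) (fun ha hb => phiInt hκ ha hb) hr

lemma Phi_contOn (hκ : ContinuousOn κ (Ici 0)) : ContinuousOn (PhiF κ) (Ici 0) :=
  fun r hr => (Phi_hasDeriv hκ hr).continuousWithinAt

lemma Phi_nonneg {r : ℝ} (hr : 0 ≤ r) : 0 ≤ PhiF κ r :=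
  intervalIntegral.integral_nonneg hr (fun u _ => (phi_pos u).le)

lemma Phi_le_id (hκ : ContinuousOn κ (Ici 0)) {r : ℝ} (hr : 0 ≤ r) : PhiF κ r ≤ r := by
  have h : PhiF κ r ≤ ∫ _ in (0:ℝ)..r, (1:ℝ) :=
    intervalIntegral.integral_mono_on hr (phiInt hκ le_rfl hr) intervalIntegrable_const
      (fun u hu => phi_le_one hκ hu.1)
  simpa using h

lemma Phi_lb (hκ : ContinuousOn κ (Ici 0)) {r : ℝ} (hr : 0 ≤ r) : r * phiF κ r ≤ PhiF κ r := by
  have h : (∫ _ in (0:ℝ)..r, phiF κ r) ≤ PhiF κ r :=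
    intervalIntegral.integral_mono_on hr intervalIntegrable_const (phiInt hκ le_rfl hr)
      (fun u hu => phi_anti hκ hu.1 hu.2)
  simpa [mul_comm] using h

lemma hQ_contOn (hκ : ContinuousOn κ (Ici 0)) :
    ContinuousOn (fun s => PhiF κ s / phiF κ s) (Ici 0) :=
  (Phi_contOn hκ).div (phi_contOn hκ) (fun s _ => (phi_pos s).ne')

lemma hQInt (hκ : ContinuousOn κ (Ici 0)) {a b : ℝ} (ha : 0 ≤ a) (hb : 0 ≤ b) :
    IntervalIntegrable (fun s => PhiF κ s / phiF κ s) volume a b :=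
  ((hQ_contOn hκ).mono (uIcc_sub ha hb)).intervalIntegrable

lemma hQ_nonneg {r : ℝ} (hr : 0 ≤ r) : 0 ≤ PhiF κ r / phiF κ r :=
  div_nonneg (Phi_nonneg hr) (phi_pos r).le

lemma hQ_ge_id (hκ : ContinuousOn κ (Ici 0)) {r : ℝ} (hr : 0 ≤ r) :
    r ≤ PhiF κ r / phiF κ r :=
  (le_div_iff₀ (phi_pos r)).2 (Phi_lb hκ hr)

lemma J_hasDeriv (hκ : ContinuousOn κ (Ici 0)) {r : ℝ} (hr : 0 ≤ r) :
    HasDerivWithinAt (fun u => ∫ s in (0:ℝ)..u, PhiF κ s / phiF κ s)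
      (PhiF κ r / phiF κ r) (Ici 0) r :=
  primitive_hasDeriv (hQ_contOn hκ) (fun ha hb => hQInt hκ ha hb) hr

lemma J_nonneg (hκ : ContinuousOn κ (Ici 0)) {r : ℝ} (hr : 0 ≤ r) :
    0 ≤ ∫ s in (0:ℝ)..r, PhiF κ s / phiF κ s :=
  intervalIntegral.integral_nonneg hr (fun u hu => hQ_nonneg hu.1)

lemma J_mono (hκ : ContinuousOn κ (Ici 0)) {x y : ℝ} (hx : 0 ≤ x) (hxy : x ≤ y) :
    (∫ s in (0:ℝ)..x, PhiF κ s / phiF κ s) ≤ ∫ s in (0:ℝ)..y, PhiF κ s / phiF κ s := by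
  have hadd := intervalIntegral.integral_add_adjacent_intervals
    (hQInt hκ le_rfl hx) (hQInt hκ hx (hx.trans hxy))
  have h : 0 ≤ ∫ s in x..y, PhiF κ s / phiF κ s :=
    intervalIntegral.integral_nonneg hxy (fun u hu => hQ_nonneg (hx.trans hu.1))
  linarith

lemma JR1_ge (hκ : ContinuousOn κ (Ici 0)) (hR1 : 0 < R1 κ) :
    R1 κ ^ 2 / 2 ≤ ∫ s in (0:ℝ)..R1 κ, PhiF κ s / phiF κ s := by
  have h : (∫ s in (0:ℝ)..R1 κ, s) ≤ ∫ s in (0:ℝ)..R1 κ, PhiF κ s / phiF κ s :=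
    intervalIntegral.integral_mono_on hR1.le (continuous_id.intervalIntegrable _ _)
      (hQInt hκ le_rfl hR1.le) (fun u hu => hQ_ge_id hκ hu.1)
  rw [integral_id] at h
  linarith

lemma JR1_pos (hκ : ContinuousOn κ (Ici 0)) (hR1 : 0 < R1 κ) :
    0 < ∫ s in (0:ℝ)..R1 κ, PhiF κ s / phiF κ s := by
  have := JR1_ge hκ hR1; nlinarith

lemma cF_pos (hκ : ContinuousOn κ (Ici 0)) (hR1 : 0 < R1 κ) : 0 < cF κ :=
  inv_pos.2 (JR1_pos hκ hR1)

lemma g_le_one (hκ : ContinuousOn κ (Ici 0)) (hR1 : 0 < R1 κ) {r : ℝ} (hr : 0 ≤ r) :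
    gF κ r ≤ 1 := by
  have h := J_nonneg hκ (le_min hr hR1.le)
  have hc := cF_pos hκ hR1
  rw [gF]
  nlinarith

lemma g_ge_half (hκ : ContinuousOn κ (Ici 0)) (hR1 : 0 < R1 κ) {r : ℝ} (hr : 0 ≤ r) :
    1/2 ≤ gF κ r := by
  have hmono := J_mono hκ (le_min hr hR1.le) (min_le_right r (R1 κ))
  have hc := cF_pos hκ hR1
  have hJpos := JR1_pos hκ hR1
  have hcc : cF κ * ∫ s in (0:ℝ)..R1 κ, PhiF κ s / phiF κ s = 1 :=
    inv_mul_cancel₀ hJpos.ne'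
  rw [gF]
  nlinarith

lemma g_eq_half (hκ : ContinuousOn κ (Ici 0)) (hR1 : 0 < R1 κ) {r : ℝ} (hr : R1 κ ≤ r) :
    gF κ r = 1/2 := by
  have hJpos := JR1_pos hκ hR1
  have hcc : cF κ * ∫ s in (0:ℝ)..R1 κ, PhiF κ s / phiF κ s = 1 :=
    inv_mul_cancel₀ hJpos.ne'
  rw [gF, min_eq_right hr]
  linarith

lemma g_contOn (hκ : ContinuousOn κ (Ici 0)) (hR1 : 0 < R1 κ) :
    ContinuousOn (gF κ) (Ici 0) := by
  have hJ : ContinuousOn (fun u => ∫ s in (0:ℝ)..u, PhiF κ s / phiF κ s) (Ici 0) :=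
    fun r hr => (J_hasDeriv hκ hr).continuousWithinAt
  have hmin : ContinuousOn (fun r : ℝ => min r (R1 κ)) (Ici 0) :=
    (continuous_id.min continuous_const).continuousOn
  exact continuousOn_const.sub (continuousOn_const.mul
    (hJ.comp hmin (fun r hr => le_min hr hR1.le)))

lemma fgInt (hκ : ContinuousOn κ (Ici 0)) (hR1 : 0 < R1 κ) {a b : ℝ} (ha : 0 ≤ a) (hb : 0 ≤ b) :
    IntervalIntegrable (fun s => phiF κ s * gF κ s) volume a b :=
  (((phi_contOn hκ).mul (g_contOn hκ hR1)).mono (uIcc_sub ha hb)).intervalIntegrable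

lemma f_nonneg (hκ : ContinuousOn κ (Ici 0)) (hR1 : 0 < R1 κ) {r : ℝ} (hr : 0 ≤ r) :
    0 ≤ fF κ r :=
  intervalIntegral.integral_nonneg hr (fun u hu => mul_nonneg (phi_pos u).le
    (by linarith [g_ge_half hκ hR1 hu.1]))

lemma f_mono (hκ : ContinuousOn κ (Ici 0)) (hR1 : 0 < R1 κ) {x y : ℝ} (hx : 0 ≤ x)
    (hxy : x ≤ y) : fF κ x ≤ fF κ y := by
  have hadd := intervalIntegral.integral_add_adjacent_intervals
    (fgInt hκ hR1 le_rfl hx) (fgInt hκ hR1 hx (hx.trans hxy))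
  have h : 0 ≤ ∫ s in x..y, phiF κ s * gF κ s :=
    intervalIntegral.integral_nonneg hxy (fun u hu => mul_nonneg (phi_pos u).le
      (by linarith [g_ge_half hκ hR1 (hx.trans hu.1)]))
  rw [fF, fF]
  linarith

lemma f_le_Phi (hκ : ContinuousOn κ (Ici 0)) (hR1 : 0 < R1 κ) {r : ℝ} (hr : 0 ≤ r) :
    fF κ r ≤ PhiF κ r :=
  intervalIntegral.integral_mono_on hr (fgInt hκ hR1 le_rfl hr) (phiInt hκ le_rfl hr)
    (fun u hu => by nlinarith [phi_pos (κ := κ) u, g_le_one hκ hR1 hu.1])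

lemma S0_nonempty (hlim : ∃ ε > (0 : ℝ), ∃ R : ℝ, ∀ r ≥ R, ε ≤ κ r) :
    {s : ℝ | 0 ≤ s ∧ ∀ r, s ≤ r → 0 ≤ κ r}.Nonempty := by
  obtain ⟨ε, hε, R, hR⟩ := hlim
  exact ⟨max R 0, le_max_right _ _,
    fun r hr => le_trans hε.le (hR r (le_trans (le_max_left _ _) hr))⟩

lemma R0_nonneg (hlim : ∃ ε > (0 : ℝ), ∃ R : ℝ, ∀ r ≥ R, ε ≤ κ r) : 0 ≤ R0 κ :=
  le_csInf (S0_nonempty hlim) (fun _ hs => hs.1)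

lemma kappa_nonneg (hκ : ContinuousOn κ (Ici 0))
    (hlim : ∃ ε > (0 : ℝ), ∃ R : ℝ, ∀ r ≥ R, ε ≤ κ r) :
    ∀ t, R0 κ ≤ t → 0 ≤ κ t := by
  have hne := S0_nonempty (κ := κ) hlim
  have hgt : ∀ t, R0 κ < t → 0 ≤ κ t := by
    intro t ht
    obtain ⟨s, hs, hst⟩ := exists_lt_of_csInf_lt hne ht
    exact hs.2 t hst.le
  intro t ht
  rcases eq_or_lt_of_le ht with heq | h
  · subst heq
    have h0 : (0:ℝ) ≤ R0 κ := R0_nonneg hlim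
    have hcw : ContinuousWithinAt κ (Ioi (R0 κ)) (R0 κ) :=
      (hκ _ h0).mono (fun x hx => le_trans h0 (le_of_lt hx))
    exact ge_of_tendsto hcw (eventually_nhdsWithin_of_forall (fun x hx => hgt x hx))
  · exact hgt t h

lemma S1_nonempty (hlim : ∃ ε > (0 : ℝ), ∃ R : ℝ, ∀ r ≥ R, ε ≤ κ r) :
    {s : ℝ | R0 κ ≤ s ∧ ∀ r, s ≤ r → 8 ≤ s * (s - R0 κ) * κ r}.Nonempty := by
  obtain ⟨ε, hε, R, hR⟩ := hlim
  have h8ε : 0 < 8 / ε := by positivity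
  have hR0 : 0 ≤ R0 κ := R0_nonneg ⟨ε, hε, R, hR⟩
  set s := max R (R0 κ + 1 + 8 / ε) with hs
  have h2 : R0 κ + 1 + 8 / ε ≤ s := le_max_right _ _
  refine ⟨s, by linarith, fun t ht => ?_⟩
  have hκt : ε ≤ κ t := hR t (le_trans (le_max_left _ _) ht)
  have hs1 : 1 ≤ s - R0 κ := by linarith
  have hs2 : 8 / ε ≤ s := by linarith
  have e1 : 8 / ε * 1 ≤ s * (s - R0 κ) :=
    mul_le_mul hs2 hs1 zero_le_one (by linarith)
  have e2 : 8 / ε * ε ≤ s * (s - R0 κ) * κ t := by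
    apply mul_le_mul (by linarith) hκt hε.le
    nlinarith
  rw [div_mul_cancel₀ _ hε.ne'] at e2
  exact e2

lemma R0_le_R1 (hlim : ∃ ε > (0 : ℝ), ∃ R : ℝ, ∀ r ≥ R, ε ≤ κ r) : R0 κ ≤ R1 κ :=
  le_csInf (S1_nonempty hlim) (fun _ hs => hs.1)

lemma phi_const (hκ : ContinuousOn κ (Ici 0))
    (hlim : ∃ ε > (0 : ℝ), ∃ R : ℝ, ∀ r ≥ R, ε ≤ κ r) {x : ℝ} (hx : R0 κ ≤ x) :
    phiF κ x = phiF κ (R0 κ) := by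
  have h0 : (0:ℝ) ≤ R0 κ := R0_nonneg hlim
  have hadd := intervalIntegral.integral_add_adjacent_intervals
    (kmInt hκ le_rfl h0) (kmInt hκ h0 (h0.trans hx))
  have hz : (∫ s in R0 κ..x, s * max 0 (-κ s)) = 0 := by
    have heq : EqOn (fun s => s * max 0 (-κ s)) (fun _ => (0:ℝ)) (uIcc (R0 κ) x) := by
      intro t ht
      rw [uIcc_of_le hx] at ht
      have hk := kappa_nonneg hκ hlim t ht.1
      simp [max_eq_left (neg_nonpos.2 hk)]
    rw [intervalIntegral.integral_congr heq, intervalIntegral.integral_zero]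
  have : (∫ s in (0:ℝ)..x, s * max 0 (-κ s)) = ∫ s in (0:ℝ)..R0 κ, s * max 0 (-κ s) := by
    linarith
  rw [phiF, phiF, this]

lemma Phi_affine (hκ : ContinuousOn κ (Ici 0))
    (hlim : ∃ ε > (0 : ℝ), ∃ R : ℝ, ∀ r ≥ R, ε ≤ κ r) {x : ℝ} (hx : R0 κ ≤ x) :
    PhiF κ x = PhiF κ (R0 κ) + (x - R0 κ) * phiF κ (R0 κ) := by
  have h0 : (0:ℝ) ≤ R0 κ := R0_nonneg hlim
  have hadd := intervalIntegral.integral_add_adjacent_intervals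
    (phiInt hκ le_rfl h0) (phiInt hκ h0 (h0.trans hx))
  have hc : (∫ s in R0 κ..x, phiF κ s) = (x - R0 κ) * phiF κ (R0 κ) := by
    have heq : EqOn (phiF κ) (fun _ => phiF κ (R0 κ)) (uIcc (R0 κ) x) := by
      intro t ht
      rw [uIcc_of_le hx] at ht
      exact phi_const hκ hlim ht.1
    rw [intervalIntegral.integral_congr heq, intervalIntegral.integral_const, smul_eq_mul]
  rw [PhiF, PhiF]
  linarith

lemma claimK (hκ : ContinuousOn κ (Ici 0))
    (hlim : ∃ ε > (0 : ℝ), ∃ R : ℝ, ∀ r ≥ R, ε ≤ κ r) (hR1 : 0 < R1 κ)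
    {r : ℝ} (hr : R1 κ < r) :
    0 < κ r ∧ 8 ≤ R1 κ * (R1 κ - R0 κ) * κ r := by
  have hne := S1_nonempty (κ := κ) hlim
  have hbdd : BddBelow {s : ℝ | R0 κ ≤ s ∧ ∀ r, s ≤ r → 8 ≤ s * (s - R0 κ) * κ r} :=
    ⟨R0 κ, fun s hs => hs.1⟩
  have hR0 : 0 ≤ R0 κ := R0_nonneg hlim
  have hR0R1 : R0 κ ≤ R1 κ := R0_le_R1 hlim
  have hκpos : 0 < κ r := by
    obtain ⟨s, hs, hslt⟩ := exists_lt_of_csInf_lt hne hr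
    have h8 := hs.2 r hslt.le
    by_contra hcon
    push_neg at hcon
    have hs0 : 0 ≤ s := hR0.trans hs.1
    have hv : 0 ≤ s * (s - R0 κ) := mul_nonneg hs0 (sub_nonneg.2 hs.1)
    nlinarith [mul_nonpos_of_nonneg_of_nonpos hv hcon]
  refine ⟨hκpos, ?_⟩
  have key : ∀ ε > (0:ℝ), 8 ≤ (R1 κ + ε) * (R1 κ + ε - R0 κ) * κ r := by
    intro ε hε
    obtain ⟨s, hs, hslt⟩ := exists_lt_of_csInf_lt hne
      (show R1 κ < min r (R1 κ + ε) from lt_min hr (by linarith))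
    have h8 := hs.2 r (le_of_lt (lt_of_lt_of_le hslt (min_le_left _ _)))
    have h1 : R1 κ ≤ s := csInf_le hbdd hs
    have h2 : s < R1 κ + ε := lt_of_lt_of_le hslt (min_le_right _ _)
    have m1 : s * (s - R0 κ) ≤ (R1 κ + ε) * (R1 κ + ε - R0 κ) := by
      nlinarith [mul_nonneg (sub_nonneg.2 h2.le) (sub_nonneg.2 hs.1),
        mul_nonneg (le_of_lt (show (0:ℝ) < R1 κ + ε by linarith)) (sub_nonneg.2 h2.le)]
    nlinarith [mul_le_mul_of_nonneg_right m1 hκpos.le]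
  have hcont : Continuous fun ε : ℝ => (R1 κ + ε) * (R1 κ + ε - R0 κ) * κ r := by
    continuity
  have htend : Filter.Tendsto (fun ε : ℝ => (R1 κ + ε) * (R1 κ + ε - R0 κ) * κ r)
      (nhdsWithin 0 (Ioi 0)) (nhds (R1 κ * (R1 κ - R0 κ) * κ r)) := by
    have h := (hcont.tendsto 0).mono_left (nhdsWithin_le_nhds (s := Ioi (0:ℝ)))
    simpa using h
  exact ge_of_tendsto htend (eventually_nhdsWithin_of_forall (fun ε hε => key ε hε))

lemma JR1_refined (hκ : ContinuousOn κ (Ici 0))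
    (hlim : ∃ ε > (0 : ℝ), ∃ R : ℝ, ∀ r ≥ R, ε ≤ κ r) :
    R0 κ ^ 2 / 2 + (PhiF κ (R0 κ) / phiF κ (R0 κ)) * (R1 κ - R0 κ) + (R1 κ - R0 κ) ^ 2 / 2
      ≤ ∫ s in (0:ℝ)..R1 κ, PhiF κ s / phiF κ s := by
  have h0 : (0:ℝ) ≤ R0 κ := R0_nonneg hlim
  have h01 : R0 κ ≤ R1 κ := R0_le_R1 hlim
  set A := PhiF κ (R0 κ) / phiF κ (R0 κ) with hA
  have hadd := intervalIntegral.integral_add_adjacent_intervals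
    (hQInt hκ le_rfl h0) (hQInt hκ h0 (h0.trans h01))
  have part1 : R0 κ ^ 2 / 2 ≤ ∫ s in (0:ℝ)..R0 κ, PhiF κ s / phiF κ s := by
    have h : (∫ s in (0:ℝ)..R0 κ, s) ≤ ∫ s in (0:ℝ)..R0 κ, PhiF κ s / phiF κ s :=
      intervalIntegral.integral_mono_on h0 (continuous_id.intervalIntegrable _ _)
        (hQInt hκ le_rfl h0) (fun u hu => hQ_ge_id hκ hu.1)
    rw [integral_id] at h
    linarith
  have part2 : (∫ s in R0 κ..R1 κ, PhiF κ s / phiF κ s)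
      = A * (R1 κ - R0 κ) + (R1 κ - R0 κ) ^ 2 / 2 := by
    have heq : EqOn (fun s => PhiF κ s / phiF κ s) (fun s => (A - R0 κ) + s)
        (uIcc (R0 κ) (R1 κ)) := by
      intro t ht
      rw [uIcc_of_le h01] at ht
      have hphi : phiF κ t = phiF κ (R0 κ) := phi_const hκ hlim ht.1
      have hPhi : PhiF κ t = PhiF κ (R0 κ) + (t - R0 κ) * phiF κ (R0 κ) :=
        Phi_affine hκ hlim ht.1
      have hp : phiF κ (R0 κ) ≠ 0 := (phi_pos _).ne'
      simp only [hphi, hPhi, hA]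
      field_simp
      ring
    rw [intervalIntegral.integral_congr heq]
    have hcomp : (∫ x in R0 κ..R1 κ, (A - R0 κ + x))
        = (A - R0 κ) * (R1 κ - R0 κ) + (R1 κ ^ 2 - R0 κ ^ 2) / 2 := by
      rw [intervalIntegral.integral_add intervalIntegrable_const
        (continuous_id'.intervalIntegrable _ _),
        intervalIntegral.integral_const, integral_id, smul_eq_mul]
      ring
    rw [hcomp]
    ring
  linarith

end Stest

set_option maxHeartbeats 2000000 in
/-- with `ω(δ) = sup_{s ∈ [0,δ]} s κ₋(s)`, for every `r ≥ 0` with `r ≠ R₁`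
(where `f` is twice differentiable within `[0,∞)`, with `f'(r) = φ(r) g(r)` and second
derivative `f''(r)`) and every `χ ∈ [0,1]` with `χ = 1` whenever `r ≥ δ`, one has
`4 f''(r) χ² − r κ(r) f'(r) ≤ −2c f(r) + ω(δ) + 2c f(δ)`. -/
theorem stmt15 (κ : ℝ → ℝ) (hκcont : ContinuousOn κ (Set.Ici 0))
    (hκliminf : ∃ ε > (0 : ℝ), ∃ R : ℝ, ∀ r ≥ R, ε ≤ κ r) (hR1 : 0 < R1 κ)
    (δ : ℝ) (hδ : 0 < δ) :
    ∀ r : ℝ, 0 ≤ r → r ≠ R1 κ → ∀ χ : ℝ, χ ∈ Set.Icc (0:ℝ) 1 → (δ ≤ r → χ = 1) →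
      ∀ f2 : ℝ, HasDerivWithinAt (fun s => phiF κ s * gF κ s) f2 (Set.Ici 0) r →
        4 * f2 * χ ^ 2 - r * κ r * (phiF κ r * gF κ r)
          ≤ -2 * cF κ * fF κ r
            + sSup ((fun s => s * max 0 (-κ s)) '' Set.Icc 0 δ) + 2 * cF κ * fF κ δ := by
  intro r hr hrne χ hχ hχ1 f2 hf2
  obtain ⟨hχ0, hχle⟩ := hχ
  have hc : 0 < cF κ := Stest.cF_pos hκcont hR1
  have hbdd : BddAbove ((fun s => s * max 0 (-κ s)) '' Set.Icc 0 δ) :=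
    (isCompact_Icc.image_of_continuousOn
      ((Stest.kmCont hκcont).mono Icc_subset_Ici_self)).bddAbove
  have hω0 : 0 ≤ sSup ((fun s => s * max 0 (-κ s)) '' Set.Icc 0 δ) := by
    apply le_csSup hbdd
    exact ⟨0, ⟨le_rfl, hδ.le⟩, by simp⟩
  have hfδ : 0 ≤ fF κ δ := Stest.f_nonneg hκcont hR1 hδ.le
  have hud : UniqueDiffWithinAt ℝ (Set.Ici (0:ℝ)) r := uniqueDiffOn_Ici 0 r hr
  rcases lt_or_gt_of_ne hrne with hlt | hgt
  · -- case r < R1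
    have hJd := Stest.J_hasDeriv hκcont hr
    have hg : HasDerivWithinAt (gF κ) (-(cF κ / 2 * (PhiF κ r / phiF κ r))) (Set.Ici 0) r := by
      have h1 : HasDerivWithinAt
          (fun s => 1 - cF κ / 2 * ∫ t in (0:ℝ)..s, PhiF κ t / phiF κ t)
          (-(cF κ / 2 * (PhiF κ r / phiF κ r))) (Set.Ici 0) r := by
        simpa using (hJd.const_mul (cF κ / 2)).const_sub 1
      refine h1.congr_of_eventuallyEq ?_ ?_
      · have hmem : Set.Iio (R1 κ) ∈ nhdsWithin r (Set.Ici 0) :=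
          nhdsWithin_le_nhds (Iio_mem_nhds hlt)
        filter_upwards [hmem] with s hs
        have hs' : s < R1 κ := mem_Iio.mp hs
        simp only [gF, min_eq_left hs'.le]
      · simp only [gF, min_eq_left hlt.le]
    have hφ := Stest.phi_hasDeriv hκcont hr
    have hF := hφ.mul hg
    have hf2eq : f2 = -(1/4) * (r * max 0 (-κ r)) * phiF κ r * gF κ r
        + phiF κ r * -(cF κ / 2 * (PhiF κ r / phiF κ r)) :=
      (hf2.derivWithin hud).symm.trans (hF.derivWithin hud)
    have hP : 0 < phiF κ r := Stest.phi_pos r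
    have hPQ : phiF κ r * -(cF κ / 2 * (PhiF κ r / phiF κ r)) = -(cF κ / 2 * PhiF κ r) := by
      have hP : (0:ℝ) < phiF κ r := Stest.phi_pos r
      field_simp
    rw [hf2eq, hPQ]
    set m := max 0 (-κ r) with hmdef
    set P := phiF κ r with hPdef
    set G := gF κ r with hGdef
    set Q := PhiF κ r with hQdef
    set C := cF κ with hCdef
    set ω := sSup ((fun s => s * max 0 (-κ s)) '' Set.Icc 0 δ) with hωdef
    set F1 := fF κ r with hF1def
    set F2 := fF κ δ with hF2def
    clear_value m P G Q C ω F1 F2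
    have hP1 : P ≤ 1 := by rw [hPdef]; exact Stest.phi_le_one hκcont hr
    have hGh : 1/2 ≤ G := by rw [hGdef]; exact Stest.g_ge_half hκcont hR1 hr
    have hG1 : G ≤ 1 := by rw [hGdef]; exact Stest.g_le_one hκcont hR1 hr
    have hQ0 : 0 ≤ Q := by rw [hQdef]; exact Stest.Phi_nonneg hr
    have hfr : F1 ≤ Q := by rw [hF1def, hQdef]; exact Stest.f_le_Phi hκcont hR1 hr
    have hm0 : 0 ≤ m := by rw [hmdef]; exact le_max_left _ _
    have hmk : -κ r ≤ m := by rw [hmdef]; exact le_max_right _ _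
    have hkm : 0 ≤ m + κ r := by linarith
    have h1 : 0 ≤ r * ((m + κ r) * (P * G)) :=
      mul_nonneg hr (mul_nonneg hkm (mul_nonneg hP.le (by linarith)))
    have h2 : C * F1 ≤ C * Q := mul_le_mul_of_nonneg_left hfr hc.le
    have h3 : 0 ≤ C * F2 := mul_nonneg hc.le hfδ
    by_cases hδr : δ ≤ r
    · rw [hχ1 hδr]
      nlinarith [h1, h2, h3, hω0]
    · push_neg at hδr
      have hrm : r * m ≤ ω := by
        rw [hmdef, hωdef]; exact le_csSup hbdd ⟨r, ⟨hr, hδr.le⟩, rfl⟩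
      have hfrδ : F1 ≤ F2 := by
        rw [hF1def, hF2def]; exact Stest.f_mono hκcont hR1 hr hδr.le
      have hPG1 : P * G ≤ 1 := by nlinarith
      have hPG0 : 0 ≤ P * G := mul_nonneg hP.le (by linarith)
      have hχsq : χ ^ 2 ≤ 1 := by nlinarith
      have hχsq0 : 0 ≤ χ ^ 2 := sq_nonneg χ
      have e0 : 0 ≤ r * m * (P * G) * χ ^ 2 :=
        mul_nonneg (mul_nonneg (mul_nonneg hr hm0) hPG0) hχsq0
      have e1 : r * m * (P * G) ≤ r * m := by
        have := mul_le_mul_of_nonneg_left hPG1 (mul_nonneg hr hm0)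
        simpa using this
      have e3 : 0 ≤ C * Q * χ ^ 2 :=
        mul_nonneg (mul_nonneg hc.le hQ0) hχsq0
      have e5 : C * F1 ≤ C * F2 := mul_le_mul_of_nonneg_left hfrδ hc.le
      nlinarith [e0, e1, e3, e5, h1, hrm]
  · -- case R1 < r
    have hR0R1 : R0 κ ≤ R1 κ := Stest.R0_le_R1 hκliminf
    have hR0 : 0 ≤ R0 κ := Stest.R0_nonneg hκliminf
    have hconst : (fun s => phiF κ s * gF κ s) =ᶠ[nhdsWithin r (Set.Ici 0)]
        (fun _ => phiF κ r * gF κ r) := by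
      have hmem : Set.Ioi (R1 κ) ∈ nhdsWithin r (Set.Ici 0) :=
        nhdsWithin_le_nhds (Ioi_mem_nhds hgt)
      filter_upwards [hmem] with s hs
      rw [Stest.phi_const hκcont hκliminf (le_trans hR0R1 (le_of_lt hs)),
        Stest.phi_const hκcont hκliminf (le_trans hR0R1 hgt.le),
        Stest.g_eq_half hκcont hR1 (le_of_lt hs), Stest.g_eq_half hκcont hR1 hgt.le]
    have h0 : HasDerivWithinAt (fun s => phiF κ s * gF κ s) 0 (Set.Ici 0) r :=
      (hasDerivWithinAt_const r _ (phiF κ r * gF κ r)).congr_of_eventuallyEq hconst rfl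
    have hf20 : f2 = 0 := (hf2.derivWithin hud).symm.trans (h0.derivWithin hud)
    obtain ⟨hκpos, hK⟩ := Stest.claimK hκcont hκliminf hR1 hgt
    have hGr : gF κ r = 1/2 := Stest.g_eq_half hκcont hR1 hgt.le
    set p := phiF κ (R0 κ) with hpdef
    have hp : 0 < p := Stest.phi_pos _
    have hphir : phiF κ r = p := Stest.phi_const hκcont hκliminf (hR0R1.trans hgt.le)
    set A := PhiF κ (R0 κ) / p with hAdef
    have hA0 : R0 κ ≤ A := Stest.hQ_ge_id hκcont hR0
    have hAnn : 0 ≤ A := hR0.trans hA0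
    have h3 : p * A = PhiF κ (R0 κ) := by rw [hAdef]; field_simp
    have hfr : fF κ r ≤ p * (A + (r - R0 κ)) := by
      have ha := Stest.f_le_Phi hκcont hR1 hr
      have hb := Stest.Phi_affine hκcont hκliminf (hR0R1.trans hgt.le)
      nlinarith
    set J := ∫ s in (0:ℝ)..R1 κ, PhiF κ s / phiF κ s with hJdef
    have hcJ : cF κ = J⁻¹ := rfl
    have hJB : R0 κ ^ 2 / 2 + A * (R1 κ - R0 κ) + (R1 κ - R0 κ) ^ 2 / 2 ≤ J :=
      Stest.JR1_refined hκcont hκliminf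
    have hJpos : 0 < J := Stest.JR1_pos hκcont hR1
    clear_value p A J
    have hd : 0 < R1 κ - R0 κ := by
      by_contra hcon
      push_neg at hcon
      have hx : R1 κ * (R1 κ - R0 κ) ≤ 0 := mul_nonpos_of_nonneg_of_nonpos hR1.le hcon
      nlinarith [mul_nonpos_of_nonpos_of_nonneg hx hκpos.le]
    have hF' : 0 ≤ A + (r - R0 κ) := by linarith
    have t1 : R0 κ * (R1 κ - R0 κ) * r ≤ A * (R1 κ - R0 κ) * r :=
      mul_le_mul_of_nonneg_right (mul_le_mul_of_nonneg_right hA0 hd.le) (by linarith)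
    have t2 : A * (R1 κ - R0 κ) * R1 κ ≤ A * (R1 κ - R0 κ) * r :=
      mul_le_mul_of_nonneg_left hgt.le (mul_nonneg hAnn hd.le)
    have t3 : (r - R0 κ) * R1 κ * (R1 κ - R0 κ) ≤ r * R1 κ * (R1 κ - R0 κ) :=
      mul_le_mul_of_nonneg_right
        (mul_le_mul_of_nonneg_right (by linarith) hR1.le) hd.le
    have hstep : (A + (r - R0 κ)) * (R1 κ * (R1 κ - R0 κ))
        ≤ 2 * r * (R0 κ ^ 2 / 2 + A * (R1 κ - R0 κ) + (R1 κ - R0 κ) ^ 2 / 2) := by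
      nlinarith [t1, t2, t3, mul_nonneg (mul_nonneg hr hR0) hR0]
    have e1 : 8 * (A + (r - R0 κ)) ≤ R1 κ * (R1 κ - R0 κ) * κ r * (A + (r - R0 κ)) :=
      mul_le_mul_of_nonneg_right hK hF'
    have e3 : κ r * ((A + (r - R0 κ)) * (R1 κ * (R1 κ - R0 κ)))
        ≤ κ r * (2 * r * (R0 κ ^ 2 / 2 + A * (R1 κ - R0 κ) + (R1 κ - R0 κ) ^ 2 / 2)) :=
      mul_le_mul_of_nonneg_left hstep hκpos.le
    have e4 : κ r * (2 * r * (R0 κ ^ 2 / 2 + A * (R1 κ - R0 κ) + (R1 κ - R0 κ) ^ 2 / 2))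
        ≤ κ r * (2 * r * J) :=
      mul_le_mul_of_nonneg_left
        (mul_le_mul_of_nonneg_left hJB (by positivity)) hκpos.le
    have e5 : 8 * (A + (r - R0 κ)) ≤ 2 * r * κ r * J := by nlinarith [e1, e3, e4]
    have e6 : 4 * fF κ r ≤ r * κ r * p * J := by
      nlinarith [mul_le_mul_of_nonneg_left e5 (show (0:ℝ) ≤ p / 2 by linarith), hfr]
    have key : 2 * cF κ * fF κ r ≤ r * κ r * (phiF κ r * gF κ r) := by
      rw [hphir, hGr, hcJ]
      have h7 : 2 * fF κ r / J ≤ r * κ r * (p * (1/2)) :=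
        (div_le_iff₀ hJpos).2 (by nlinarith [e6])
      calc 2 * J⁻¹ * fF κ r = 2 * fF κ r / J := by rw [inv_eq_one_div]; ring
        _ ≤ _ := h7
    rw [hf20]
    have h8 : 0 ≤ cF κ * fF κ δ := mul_nonneg hc.le hfδ
    nlinarith [key, hω0, h8]
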